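/- If {a_n} is an increasing sequence of real numbers with a_n > n^{1+ε} for some ε > 0 and all n ∈ ℕ, then for all N ∈ ℕ, the tail sum ∑_{n=N}^∞ 1/a_n is strictly less than (2 + 1/ε) / a_N^{ε/(1+ε)}. -/

import Mathlib

open Real Finset

private lemma tail_rpow_bound (ε : ℝ) (hε : 0 < ε) (M : ℕ) (hM : 1 ≤ M) :
    (∑' n : ℕ, ((M + 1 + n : ℕ) : ℝ) ^ (-(1 + ε))) ≤ (M : ℝ) ^ (-ε) / ε := by
  have hM1 : (1 : ℝ) ≤ (M : ℝ) := by exact_mod_cast hM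
  have hg : Summable (fun n : ℕ => (n : ℝ) ^ (-(1 + ε))) :=
    Real.summable_nat_rpow.2 (by linarith)
  have hg1 : Summable (fun n : ℕ => ((M + 1 + n : ℕ) : ℝ) ^ (-(1 + ε))) := by
    have := (summable_nat_add_iff (M + 1)).2 hg
    apply this.congr
    intro n
    simp [add_comm]
  refine Summable.tsum_le_of_sum_le hg1 fun s => ?_
  obtain ⟨T, hT⟩ := s.exists_nat_subset_range
  have hanti : AntitoneOn (fun x : ℝ => x ^ (-(1 + ε))) (Set.Icc (M : ℝ) ((M : ℝ) + T)) := by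
    apply (Real.antitoneOn_rpow_Ioi_of_exponent_nonpos (by linarith)).mono
    intro x hx
    have : (0:ℝ) < x := lt_of_lt_of_le (by linarith) hx.1
    exact this
  calc ∑ n ∈ s, ((M + 1 + n : ℕ) : ℝ) ^ (-(1 + ε))
      ≤ ∑ n ∈ Finset.range T, ((M + 1 + n : ℕ) : ℝ) ^ (-(1 + ε)) :=
        Finset.sum_le_sum_of_subset_of_nonneg hT (fun i _ _ => by positivity)
    _ = ∑ i ∈ Finset.range T, ((M : ℝ) + ((i + 1 : ℕ) : ℝ)) ^ (-(1 + ε)) := by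
        apply Finset.sum_congr rfl
        intro i _
        push_cast
        ring_nf
    _ ≤ ∫ x in (M : ℝ)..((M : ℝ) + T), x ^ (-(1 + ε)) := hanti.sum_le_integral
    _ ≤ (M : ℝ) ^ (-ε) / ε := by
        rw [integral_rpow (Or.inr ⟨by intro h; nlinarith, by
          apply Set.notMem_uIcc_of_lt <;> positivity⟩)]
        have h1 : -(1 + ε) + 1 = -ε := by ring
        rw [h1]
        have h2 : (((M : ℝ) + T) ^ (-ε) - (M : ℝ) ^ (-ε)) / (-ε)
            = ((M : ℝ) ^ (-ε) - ((M : ℝ) + T) ^ (-ε)) / ε := by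
          rw [div_neg, ← neg_div, neg_sub]
        rw [h2]
        have h3 : (0:ℝ) ≤ ((M : ℝ) + T) ^ (-ε) := by positivity
        gcongr
        linarith

/-- tail sum bound for series of reciprocals of an increasing
sequence growing faster than `n ^ (1+ε)` (sequence indexed from 1). -/
theorem stmt0 (ε : ℝ) (hε : 0 < ε) (a : ℕ → ℝ) (hmono : Monotone a)
    (hgt : ∀ n : ℕ, 1 ≤ n → (n : ℝ) ^ (1 + ε) < a n) :
    ∀ N : ℕ, 1 ≤ N →
      (∑' n : ℕ, 1 / a (N + n)) < (2 + 1 / ε) / a N ^ (ε / (1 + ε)) := by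
  intro N hN
  have h1ε : (0:ℝ) < 1 + ε := by linarith
  have hN1 : (1 : ℝ) ≤ (N : ℝ) := by exact_mod_cast hN
  have hA1 : 1 < a N :=
    lt_of_le_of_lt (Real.one_le_rpow hN1 (by positivity)) (hgt N hN)
  have hA0 : (0:ℝ) < a N := by linarith
  set A := a N with hA
  set B : ℝ := A ^ (1 / (1 + ε)) with hB
  have hB1 : 1 < B := Real.one_lt_rpow_iff_of_pos hA0 |>.2 (Or.inl ⟨hA1, by positivity⟩)
  set M : ℕ := max N ⌈B⌉₊ with hMdef
  have hMN : N ≤ M := le_max_left _ _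
  have hM1 : 1 ≤ M := le_trans hN hMN
  have hM1' : (1:ℝ) ≤ (M:ℝ) := by exact_mod_cast hM1
  have hBM : B ≤ (M : ℝ) := by
    refine le_trans (Nat.le_ceil B) ?_
    exact_mod_cast le_max_right N ⌈B⌉₊
  -- positivity of a
  have hapos : ∀ n : ℕ, 1 ≤ n → 0 < a n := by
    intro n hn
    have hn1 : (1:ℝ) ≤ (n:ℝ) := by exact_mod_cast hn
    have := hgt n hn
    nlinarith [Real.one_le_rpow hn1 (le_of_lt h1ε)]
  -- define C, the target quantity
  set C : ℝ := A ^ (-(ε / (1 + ε))) with hC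
  have hC0 : 0 < C := Real.rpow_pos_of_pos hA0 _
  -- key summability facts
  have hg : Summable (fun n : ℕ => (n : ℝ) ^ (-(1 + ε))) :=
    Real.summable_nat_rpow.2 (by linarith)
  have hgshift : ∀ k : ℕ, Summable (fun n : ℕ => ((k + n : ℕ) : ℝ) ^ (-(1 + ε))) := by
    intro k
    have := (summable_nat_add_iff k).2 hg
    apply this.congr
    intro n
    simp [add_comm]
  have hterm_le : ∀ k n : ℕ, 1 ≤ k → 1 / a (k + n) ≤ ((k + n : ℕ) : ℝ) ^ (-(1 + ε)) := by
    intro k n hk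
    have hkn : 1 ≤ k + n := le_trans hk (Nat.le_add_right k n)
    have hkn1 : (1:ℝ) ≤ ((k + n : ℕ) : ℝ) := by exact_mod_cast hkn
    have hp : (0:ℝ) < ((k + n : ℕ) : ℝ) ^ (1 + ε) := Real.rpow_pos_of_pos (by linarith) _
    have hlt : ((k + n : ℕ) : ℝ) ^ (1 + ε) < a (k + n) := hgt _ hkn
    rw [Real.rpow_neg (by linarith), ← one_div]
    exact le_of_lt (one_div_lt_one_div_of_lt hp hlt)
  have hfs : ∀ k : ℕ, 1 ≤ k → Summable (fun n : ℕ => 1 / a (k + n)) := by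
    intro k hk
    apply Summable.of_nonneg_of_le (fun n => ?_) (fun n => hterm_le k n hk) (hgshift k)
    exact le_of_lt (one_div_pos.2 (hapos _ (le_trans hk (Nat.le_add_right k n))))
  -- split the sum at index M
  have hsplit : (∑' n : ℕ, 1 / a (N + n))
      = (∑ i ∈ Finset.range (M - N), 1 / a (N + i)) + ∑' n : ℕ, 1 / a (M + n) := by
    rw [← Summable.sum_add_tsum_nat_add (M - N) (hfs N hN)]
    congr 1
    apply tsum_congr
    intro n
    congr 2
    omega
  -- bound the finite part
  have hfirst : (∑ i ∈ Finset.range (M - N), 1 / a (N + i)) ≤ C := by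
    have hMB : ((M - N : ℕ) : ℝ) ≤ B := by
      rcases le_total (⌈B⌉₊) N with h | h
      · have : M = N := by omega
        rw [this]
        simp
        linarith
      · have hMc : M = ⌈B⌉₊ := by omega
        have h1 : (⌈B⌉₊ : ℝ) < B + 1 := Nat.ceil_lt_add_one (by linarith)
        have h2 : ((M - N : ℕ) : ℝ) = (M : ℝ) - N := by
          rw [Nat.cast_sub hMN]
        rw [h2, hMc]
        linarith
    calc (∑ i ∈ Finset.range (M - N), 1 / a (N + i))
        ≤ ∑ i ∈ Finset.range (M - N), 1 / A := by
          apply Finset.sum_le_sum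
          intro i _
          exact one_div_le_one_div_of_le hA0 (hmono (Nat.le_add_right N i))
      _ = ((M - N : ℕ) : ℝ) * (1 / A) := by
          rw [Finset.sum_const, Finset.card_range, nsmul_eq_mul]
      _ ≤ B * (1 / A) := by
          apply mul_le_mul_of_nonneg_right hMB
          positivity
      _ = C := by
          have e1 : B * (1 / A) = A ^ (1 / (1 + ε)) * A ^ (-1 : ℝ) := by
            rw [hB, Real.rpow_neg_one, one_div A]
          rw [e1, ← Real.rpow_add hA0, hC]
          congr 1
          field_simp
          ring
  -- strict bound on the tail part
  have hMrpow : (1:ℝ) / a M < ((M : ℕ) : ℝ) ^ (-(1 + ε)) := by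
    have hp : (0:ℝ) < ((M : ℕ) : ℝ) ^ (1 + ε) := Real.rpow_pos_of_pos (by linarith) _
    rw [Real.rpow_neg (by linarith : (0:ℝ) ≤ ((M:ℕ):ℝ)), ← one_div]
    exact one_div_lt_one_div_of_lt hp (hgt M hM1)
  have htail_lt : (∑' n : ℕ, 1 / a (M + n)) < ∑' n : ℕ, ((M + n : ℕ) : ℝ) ^ (-(1 + ε)) := by
    apply Summable.tsum_lt_tsum (i := 0) (fun n => hterm_le M n hM1) _ (hfs M hM1) (hgshift M)
    simpa using hMrpow
  -- bound the rpow tail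
  have hBpos : (0:ℝ) < B := by linarith
  have hBneg : ∀ q : ℝ, 0 < q → (M : ℝ) ^ (-q) ≤ B ^ (-q) := by
    intro q hq
    exact Real.rpow_le_rpow_of_nonpos hBpos hBM (by linarith)
  have hBe : B ^ (-ε) = C := by
    rw [hB, ← Real.rpow_mul hA0.le]
    congr 1
    field_simp
  have hB1e : B ^ (-(1 + ε)) = A ^ (-1 : ℝ) := by
    rw [hB, ← Real.rpow_mul hA0.le]
    congr 1
    field_simp
  have hsplit2 : (∑' n : ℕ, ((M + n : ℕ) : ℝ) ^ (-(1 + ε)))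
      = ((M : ℕ) : ℝ) ^ (-(1 + ε)) + ∑' n : ℕ, ((M + 1 + n : ℕ) : ℝ) ^ (-(1 + ε)) := by
    have h0 : ((M + 0 : ℕ) : ℝ) ^ (-(1 + ε)) = ((M : ℕ) : ℝ) ^ (-(1 + ε)) := by norm_num
    have hf : ∀ n : ℕ, ((M + (n + 1) : ℕ) : ℝ) ^ (-(1 + ε))
        = ((M + 1 + n : ℕ) : ℝ) ^ (-(1 + ε)) := by
      intro n; congr 2; omega
    rw [Summable.tsum_eq_zero_add (hgshift M), h0, tsum_congr hf]
  have hAC : A ^ (-1 : ℝ) ≤ C := by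
    apply Real.rpow_le_rpow_of_exponent_le hA1.le
    rw [neg_le_neg_iff]
    rw [div_le_one h1ε]
    linarith
  have h2 : ((M : ℕ) : ℝ) ^ (-(1 + ε)) ≤ C := by
    calc ((M : ℕ) : ℝ) ^ (-(1 + ε)) ≤ B ^ (-(1 + ε)) := hBneg (1 + ε) h1ε
      _ = A ^ (-1 : ℝ) := hB1e
      _ ≤ C := hAC
  have h3 : (∑' n : ℕ, ((M + 1 + n : ℕ) : ℝ) ^ (-(1 + ε))) ≤ C / ε := by
    calc (∑' n : ℕ, ((M + 1 + n : ℕ) : ℝ) ^ (-(1 + ε)))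
        ≤ (M : ℝ) ^ (-ε) / ε := tail_rpow_bound ε hε M hM1
      _ ≤ B ^ (-ε) / ε := by
          apply div_le_div_of_nonneg_right (hBneg ε hε) hε.le
      _ = C / ε := by rw [hBe]
  have hRHS : (2 + 1 / ε) / A ^ (ε / (1 + ε)) = (2 + 1 / ε) * C := by
    rw [hC, Real.rpow_neg hA0.le, div_eq_mul_inv]
  rw [hsplit, hRHS]
  have hfinal : 2 * C + C / ε = (2 + 1 / ε) * C := by
    field_simp
  have := htail_lt
  rw [hsplit2] at this
  linarith
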